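/- Let v be an element of the degree-2 part of F and let b₁, b₂ ∈ ℂ. Then in H_v the identity (x₁ + b₁·y)² + (x₂ + b₂·y)² + (x₁ + b₁·y)·(x₂ + b₂·y) = 0 holds if and only if (b₁² + b₂² + b₁·b₂)·v = (2b₁ + b₂)·x₁ + (b₁ + 2b₂)·x₂ in F. -/

import Mathlib

noncomputable section

open MvPolynomial

/-- The relations ideal for the cohomology of the flag manifold `SU(3)/T`. -/
def Frel : Ideal (MvPolynomial (Fin 2) ℂ) :=
  Ideal.span {X 0 ^ 2 + X 1 ^ 2 + X 0 * X 1, X 0 ^ 2 * X 1 + X 0 * X 1 ^ 2}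

/-- `F = ℂ[x₁,x₂]/(x₁²+x₂²+x₁x₂, x₁²x₂+x₁x₂²)`. -/
abbrev F := MvPolynomial (Fin 2) ℂ ⧸ Frel

def x₁ : F := Ideal.Quotient.mk Frel (X 0)
def x₂ : F := Ideal.Quotient.mk Frel (X 1)

/-- The degree-2 part of `F`. -/
def deg2F : Submodule ℂ F := Submodule.span ℂ {x₁, x₂}

/-- The relations ideal for `H_u = F[y]/(y² + u·y)`. -/
def Hrel (u : F) : Ideal (Polynomial F) :=
  Ideal.span {Polynomial.X ^ 2 + Polynomial.C u * Polynomial.X}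

/-- `H_u = F[y]/(y² + u·y)`. -/
instance Hrel_isTwoSided (u : F) : (Hrel u).IsTwoSided :=
  ⟨fun b ha => mul_comm b _ ▸ (Hrel u).smul_mem _ ha⟩

abbrev H (u : F) := Polynomial F ⧸ Hrel u

/-- The class `y` in `H_u`. -/
def yH (u : F) : H u := Ideal.Quotient.mk (Hrel u) Polynomial.X

/-- The canonical map `F → H_u`, as a `ℂ`-algebra homomorphism. -/
def ιH (u : F) : F →ₐ[ℂ] H u :=
  (Ideal.Quotient.mkₐ ℂ (Hrel u)).comp (IsScalarTower.toAlgHom ℂ F (Polynomial F))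

/-- The degree-2 part of `H_u`. -/
def deg2H (u : F) : Submodule ℂ (H u) :=
  Submodule.span ℂ {ιH u x₁, ιH u x₂, yH u}

/-- `ω` acts on degree 2 by the matrix `(a₁₁ a₁₂; a₂₁ a₂₂)`. -/
def actsAs (ω : F ≃ₐ[ℂ] F) (a₁₁ a₁₂ a₂₁ a₂₂ : ℂ) : Prop :=
  ω x₁ = a₁₁ • x₁ + a₂₁ • x₂ ∧ ω x₂ = a₁₂ • x₁ + a₂₂ • x₂

/-- Membership in the Weyl group `W` (the six listed automorphisms). -/
def InW (ω : F ≃ₐ[ℂ] F) : Prop :=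
  actsAs ω 1 0 0 1 ∨ actsAs ω 0 1 1 0 ∨ actsAs ω (-1) 0 (-1) 1 ∨
    actsAs ω 1 (-1) 0 (-1) ∨ actsAs ω 0 (-1) 1 (-1) ∨ actsAs ω (-1) 1 (-1) 0

set_option maxHeartbeats 1000000
set_option synthInstance.maxHeartbeats 400000

instance : Nontrivial F := by
  refine Ideal.Quotient.nontrivial_iff.mpr (fun htop => ?_)
  have hle : Frel ≤ RingHom.ker (aeval (R := ℂ) (fun _ : Fin 2 => (0:ℂ))).toRingHom := by
    rw [Frel, Ideal.span_le]
    rintro p hp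
    simp only [Set.mem_insert_iff, Set.mem_singleton_iff] at hp
    rcases hp with rfl | rfl <;> simp [RingHom.mem_ker]
  rw [htop] at hle
  have h1 : (1 : MvPolynomial (Fin 2) ℂ) ∈ RingHom.ker (aeval (R := ℂ) (fun _ : Fin 2 => (0:ℂ))).toRingHom :=
    hle Submodule.mem_top
  simp [RingHom.mem_ker] at h1

/-- The fundamental relation holds in `F`. -/
lemma hF0 : x₁ ^ 2 + x₂ ^ 2 + x₁ * x₂ = 0 := by
  rw [x₁, x₂, ← map_pow, ← map_pow, ← map_mul, ← map_add, ← map_add,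
    Ideal.Quotient.eq_zero_iff_mem]
  exact Ideal.subset_span (Or.inl rfl)

lemma hdeglt (v : F) : (Polynomial.C v * Polynomial.X : Polynomial F).degree < 2 := by
  calc (Polynomial.C v * Polynomial.X).degree ≤ (Polynomial.C v).degree + Polynomial.X.degree :=
        Polynomial.degree_mul_le _ _
    _ ≤ 0 + 1 := add_le_add Polynomial.degree_C_le (le_of_eq Polynomial.degree_X)
    _ < 2 := by norm_num

lemma fmonic (v : F) : (Polynomial.X ^ 2 + Polynomial.C v * Polynomial.X : Polynomial F).Monic :=
  Polynomial.monic_X_pow_add (by exact_mod_cast hdeglt v)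

lemma fdeg (v : F) : (Polynomial.X ^ 2 + Polynomial.C v * Polynomial.X : Polynomial F).degree = 2 := by
  have h' : (Polynomial.C v * Polynomial.X : Polynomial F).degree <
      ((Polynomial.X : Polynomial F) ^ 2).degree := by
    rw [Polynomial.degree_X_pow]; exact_mod_cast hdeglt v
  rw [Polynomial.degree_add_eq_left_of_degree_lt h', Polynomial.degree_X_pow]
  rfl

/-- `y² = -v·y` in `H_v`. -/
lemma hy2 (v : F) : yH v ^ 2 = -(ιH v v * yH v) := by
  have h : (Polynomial.X ^ 2 + Polynomial.C v * Polynomial.X : Polynomial F) ∈ Hrel v :=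
    Ideal.subset_span rfl
  have h0 := (Ideal.Quotient.eq_zero_iff_mem (I := Hrel v)).2 h
  rw [map_add] at h0
  have h2 : ιH v v * yH v = Ideal.Quotient.mk (Hrel v) (Polynomial.C v * Polynomial.X) := by
    simp [ιH, yH]
  rw [h2, yH, ← map_pow]
  exact eq_neg_of_add_eq_zero_left h0

/-- Freeness: `c · y = 0` in `H_v` iff `c = 0` in `F`. -/
lemma iy_zero_iff (v : F) (c : F) : ιH v c * yH v = 0 ↔ c = 0 := by
  constructor
  · intro h
    have h1 : ιH v c * yH v = Ideal.Quotient.mk (Hrel v) (Polynomial.C c * Polynomial.X) := by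
      simp [ιH, yH]
    rw [h1, Ideal.Quotient.eq_zero_iff_mem, Hrel] at h
    replace h := (Ideal.mem_span_singleton (α := Polynomial F)).mp h
    by_contra hc
    have hdeg : (Polynomial.C c * Polynomial.X : Polynomial F).degree = 1 :=
      Polynomial.degree_C_mul_X hc
    have hne : (Polynomial.C c * Polynomial.X : Polynomial F) ≠ 0 := by
      intro h0; rw [h0, Polynomial.degree_zero] at hdeg; exact absurd hdeg (by simp)
    refine (fmonic v).not_dvd_of_degree_lt hne ?_ h
    rw [hdeg, fdeg v]
    decide
  · intro h; rw [h]; simp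


/-- For `v` in the degree-2 part of `F` and `b₁, b₂ ∈ ℂ`, the identity
`(x₁ + b₁·y)² + (x₂ + b₂·y)² + (x₁ + b₁·y)·(x₂ + b₂·y) = 0` holds in `H_v` if and only
if `(b₁² + b₂² + b₁·b₂)·v = (2b₁ + b₂)·x₁ + (b₁ + 2b₂)·x₂` in `F`. -/
theorem stmt19 (v : F) (hv : v ∈ deg2F) (b₁ b₂ : ℂ) :
    (ιH v x₁ + b₁ • yH v) ^ 2 + (ιH v x₂ + b₂ • yH v) ^ 2 +
        (ιH v x₁ + b₁ • yH v) * (ιH v x₂ + b₂ • yH v) = 0 ↔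
      (b₁ ^ 2 + b₂ ^ 2 + b₁ * b₂) • v = (2 * b₁ + b₂) • x₁ + (b₁ + 2 * b₂) • x₂ := by
  have hrel : ιH v x₁ ^ 2 + ιH v x₂ ^ 2 + ιH v x₁ * ιH v x₂ = 0 := by
    rw [← map_pow (ιH v), ← map_pow (ιH v), ← map_mul (ιH v), ← map_add (ιH v),
      ← map_add (ιH v), hF0, map_zero]
  have key : (ιH v x₁ + b₁ • yH v) ^ 2 + (ιH v x₂ + b₂ • yH v) ^ 2 +
        (ιH v x₁ + b₁ • yH v) * (ιH v x₂ + b₂ • yH v) =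
      ιH v (((2 * b₁ + b₂) • x₁ + (b₁ + 2 * b₂) • x₂) - (b₁ ^ 2 + b₂ ^ 2 + b₁ * b₂) • v) *
        yH v := by
    have hs : ∀ (b : ℂ) (z : H v), b • z = algebraMap ℂ (H v) b * z :=
      fun b z => Algebra.smul_def b z
    have hsF : ∀ (b : ℂ) (w : F), b • w = algebraMap ℂ F b * w :=
      fun b w => Algebra.smul_def b w
    simp only [hs, hsF, map_sub (ιH v), map_add (ιH v), map_mul (ιH v), map_pow (ιH v),
      map_add (algebraMap ℂ (H v)), map_mul (algebraMap ℂ (H v)), map_pow (algebraMap ℂ (H v)),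
      map_ofNat, (ιH v).commutes]
    letI : CommRing (H v) := Ideal.Quotient.commRing (R := Polynomial F) (Hrel v)
    linear_combination hrel + (algebraMap ℂ (H v) b₁ ^ 2 + algebraMap ℂ (H v) b₂ ^ 2 +
      algebraMap ℂ (H v) b₁ * algebraMap ℂ (H v) b₂) * hy2 v
  rw [key, iy_zero_iff, sub_eq_zero, eq_comm]
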